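/- For any polynomial map p : ℝ^d → ℝ^m with p(0) = 0, the map M_p : T(ℝ^m) → T(ℝ^d) is an algebra homomorphism for the shuffle products: M_p(e) = e and M_p(x ⧢ y) = M_p(x) ⧢ M_p(y) for all x, y ∈ T(ℝ^m). -/

import Mathlib

noncomputable section

open MeasureTheory

/-- Words in the alphabet `{1,…,d}`. -/
abbrev Word (d : ℕ) := List (Fin d)

/-- `T(ℝ^d)`: the real vector space with basis the words in `{1,…,d}`. -/
abbrev Tens (d : ℕ) := Word d →₀ ℝ

namespace SigPaper

variable {d m s : ℕ}

/-- The basis word `w` as an element of `T(ℝ^d)`. -/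
def wordT (w : Word d) : Tens d := Finsupp.single w 1

/-- The shuffle product of two words. -/
def shuffleWord : Word d → Word d → Tens d
  | [], v => Finsupp.single v 1
  | u, [] => Finsupp.single u 1
  | a :: u, b :: v =>
      Finsupp.mapDomain (fun w => a :: w) (shuffleWord u (b :: v)) +
      Finsupp.mapDomain (fun w => b :: w) (shuffleWord (a :: u) v)
  termination_by u v => u.length + v.length
  decreasing_by all_goals simp +arith +decide

/-- The shuffle product `⧢` on `T(ℝ^d)`, the bilinear extension of the shuffle of words. -/
def shuffle (x y : Tens d) : Tens d :=
  x.sum fun u a => y.sum fun v b => (a * b) • shuffleWord u v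

/-- The operator appending the letter `i` at the end of every word (`T_i^+`). -/
def appendLetter (i : Fin d) (x : Tens d) : Tens d :=
  Finsupp.mapDomain (fun w => w ++ [i]) x

/-- The right half-shuffle of two words: `w ≻ (v∘i) = (w ⧢ v)∘i` (zero if the right word
is empty). -/
def halfShuffleWord (u v : Word d) : Tens d :=
  match v.getLast? with
  | none => 0
  | some i => appendLetter i (shuffleWord u v.dropLast)

/-- The right half-shuffle `≻`, extended bilinearly. -/
def halfShuffle (x y : Tens d) : Tens d :=
  x.sum fun u a => y.sum fun v b => (a * b) • halfShuffleWord u v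

/-- The letter-appending operator `T_i^+`. -/
def Tplus (i : Fin d) : Tens d → Tens d := appendLetter i

/-- `T_i^-` on a word: removes the last letter if it equals `i`, otherwise `0`. -/
def TminusWord (i : Fin d) (w : Word d) : Tens d :=
  match w.getLast? with
  | none => 0
  | some j => if j = i then Finsupp.single w.dropLast 1 else 0

/-- The letter-removing operator `T_i^-`. -/
def Tminus (i : Fin d) (x : Tens d) : Tens d := x.sum fun w a => a • TminusWord i w

/-- The single-letter word `i` in `T(ℝ^d)`. -/
def letterT (i : Fin d) : Tens d := Finsupp.single [i] 1

/-- Shuffle powers `x^{⧢ n}`. -/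
def shufflePow (x : Tens d) : ℕ → Tens d
  | 0 => Finsupp.single [] 1
  | n + 1 => shuffle (shufflePow x n) x

/-- Shuffle product of a list of elements. -/
def shuffleList : List (Tens d) → Tens d
  | [] => Finsupp.single [] 1
  | x :: xs => shuffle x (shuffleList xs)

/-- Image of the monomial `x^t` under `φ_d`: the shuffle product of its letters. -/
def phiMon (t : Fin d →₀ ℕ) : Tens d :=
  shuffleList ((List.finRange d).map fun i => shufflePow (letterT i) (t i))

/-- The embedding `φ_d : ℝ[x₁,…,x_d] → (T(ℝ^d), ⧢)` sending the monomial
`x_{i₁}⋯x_{i_l}` to `i₁ ⧢ ⋯ ⧢ i_l`. -/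
def phi (f : MvPolynomial (Fin d) ℝ) : Tens d :=
  f.support.sum fun t => f.coeff t • phiMon t

/-- A polynomial map `p : ℝ^d → ℝ^m`, given by `m` polynomials in `d` variables. -/
abbrev PolyMap (d m : ℕ) := Fin m → MvPolynomial (Fin d) ℝ

/-- `k_p^{ij} = φ_d(∂p_i/∂x_j) ∈ T(ℝ^d)`. -/
def kP (p : PolyMap d m) (i : Fin m) (j : Fin d) : Tens d :=
  phi (MvPolynomial.pderiv j (p i))

/-- Auxiliary: `M_p` on reversed words, so that `M_p(e) = e` and
`M_p(w∘i) = Σ_j (M_p(w) ⧢ k_p^{ij})∘j`. -/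
def MpRev (p : PolyMap d m) : List (Fin m) → Tens d
  | [] => Finsupp.single [] 1
  | i :: w => ∑ j : Fin d, appendLetter j (shuffle (MpRev p w) (kP p i j))

/-- `M_p` on a word. -/
def MpWord (p : PolyMap d m) (w : Word m) : Tens d := MpRev p w.reverse

/-- The linear map `M_p : T(ℝ^m) → T(ℝ^d)`. -/
def Mp (p : PolyMap d m) (x : Tens m) : Tens d := x.sum fun w a => a • MpWord p w

/-- `X : [0,L] → ℝ^d` is piecewise continuously differentiable: there is a partition
`0 = t₀ ≤ t₁ ≤ ⋯ ≤ t_n = L` such that `X` is `C¹` on each subinterval. -/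
def PiecewiseC1 (X : ℝ → Fin d → ℝ) (L : ℝ) : Prop :=
  ∃ (n : ℕ) (t : Fin (n + 1) → ℝ), Monotone t ∧ t 0 = 0 ∧ t (Fin.last n) = L ∧
    ∀ k : Fin n, ContDiffOn ℝ 1 X (Set.Icc (t k.castSucc) (t k.succ))

/-- Iterated-integral signature coefficients, on reversed words:
`⟨σ(X|_{[0,t]}), w∘i⟩ = ∫_0^t ⟨σ(X|_{[0,r]}), w⟩ Ẋ^i_r dr`. -/
def sigRev (X : ℝ → Fin d → ℝ) : List (Fin d) → ℝ → ℝ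
  | [], _ => 1
  | i :: w, t => ∫ r in (0:ℝ)..t, sigRev X w r * deriv (fun u => X u i) r

/-- `⟨σ(X|_{[0,L]}), w⟩`, the signature coefficient of the word `w`. -/
def sigWord (X : ℝ → Fin d → ℝ) (L : ℝ) (w : Word d) : ℝ := sigRev X w.reverse L

/-- The pairing `⟨σ(X|_{[0,L]}), x⟩` for `x ∈ T(ℝ^d)`. -/
def sigT (X : ℝ → Fin d → ℝ) (L : ℝ) (x : Tens d) : ℝ :=
  x.sum fun w a => a * sigWord X L w

/-- The transformed path `p(X) : t ↦ p(X(t))`. -/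
def pPath (p : PolyMap d m) (X : ℝ → Fin d → ℝ) : ℝ → Fin m → ℝ :=
  fun t i => MvPolynomial.eval (X t) (p i)

/-- The translated polynomial map `p̃(y) = p(y + x₀) − p(x₀)`, satisfying `p̃(0) = 0`. -/
def ptilde (p : PolyMap d m) (x0 : Fin d → ℝ) : PolyMap d m := fun i =>
  MvPolynomial.aeval (fun j => MvPolynomial.X j + MvPolynomial.C (x0 j)) (p i) -
    MvPolynomial.C (MvPolynomial.eval x0 (p i))

/-- The pairing `⟨exp_∘(L·𝟙), x⟩` for `x ∈ T(ℝ¹)`: the coefficient of the word of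
length `n` in `exp_∘(L·𝟙)` is `Lⁿ/n!`. -/
def expPair (L : ℝ) (x : Tens 1) : ℝ :=
  x.sum fun w a => a * (L ^ w.length / (w.length.factorial : ℝ))

/-- The pairing `⟨σ(X) ∘ σ(Y), x⟩` of the concatenation product of two signatures with
`x ∈ T(ℝ^d)`: on a word `w` it is `Σ_{u∘v = w} ⟨σ(X), u⟩·⟨σ(Y), v⟩`. -/
def concatPair (X Y : ℝ → Fin d → ℝ) (L : ℝ) (x : Tens d) : ℝ :=
  x.sum fun w a =>
    a * ∑ k ∈ Finset.range (w.length + 1), sigWord X L (w.take k) * sigWord Y L (w.drop k)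


set_option linter.dupNamespace false
open Finsupp

theorem shuffleWord_cons (a b : Fin d) (u v : Word d) : shuffleWord (a::u) (b::v) =
    Finsupp.mapDomain (fun w => a :: w) (shuffleWord u (b :: v)) +
      Finsupp.mapDomain (fun w => b :: w) (shuffleWord (a :: u) v) := by
  rw [shuffleWord]

theorem shuffleWord_nil_left (v : Word d) : shuffleWord ([]:Word d) v = Finsupp.single v 1 := by
  rw [shuffleWord]

theorem shuffleWord_nil_right (u : Word d) : shuffleWord u ([]:Word d) = Finsupp.single u 1 := by
  cases u <;> rw [shuffleWord] <;> simp

theorem shuffle_zero_left (y : Tens d) : shuffle 0 y = 0 := by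
  simp [shuffle]

theorem shuffle_zero_right (x : Tens d) : shuffle x 0 = 0 := by
  simp [shuffle]

theorem shuffle_add_left (x x' y : Tens d) :
    shuffle (x + x') y = shuffle x y + shuffle x' y := by
  rw [shuffle, Finsupp.sum_add_index] <;>
    simp [add_mul, add_smul, Finsupp.sum_add, shuffle]

theorem shuffle_add_right (x y y' : Tens d) :
    shuffle x (y + y') = shuffle x y + shuffle x y' := by
  rw [shuffle]
  have : ∀ u a, ((y + y').sum fun v b => ((a:ℝ) * b) • shuffleWord u v) =
      (y.sum fun v b => (a * b) • shuffleWord u v) +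
      (y'.sum fun v b => (a * b) • shuffleWord u v) := by
    intro u a
    rw [Finsupp.sum_add_index] <;> simp [mul_add, add_smul]
  simp only [this]
  rw [Finsupp.sum_add]
  rfl

theorem shuffle_smul_left (c : ℝ) (x y : Tens d) :
    shuffle (c • x) y = c • shuffle x y := by
  rw [shuffle, Finsupp.sum_smul_index]
  · rw [shuffle, Finsupp.smul_sum]
    refine Finsupp.sum_congr fun u _ => ?_
    rw [Finsupp.smul_sum]
    exact Finsupp.sum_congr fun v _ => by rw [mul_assoc, mul_smul]
  · intro u; simp

theorem shuffle_smul_right (c : ℝ) (x y : Tens d) :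
    shuffle x (c • y) = c • shuffle x y := by
  rw [shuffle, shuffle, Finsupp.smul_sum]
  refine Finsupp.sum_congr fun u a => ?_
  rw [Finsupp.sum_smul_index, Finsupp.smul_sum]
  · exact Finsupp.sum_congr fun v b => by rw [smul_smul]; congr 1; ring
  · intro v; simp

/-- shuffle as a bilinear map -/
def shuffleLM : Tens d →ₗ[ℝ] Tens d →ₗ[ℝ] Tens d :=
  LinearMap.mk₂ ℝ shuffle shuffle_add_left shuffle_smul_left shuffle_add_right
    shuffle_smul_right

theorem shuffle_single (u v : Word d) (c e : ℝ) :
    shuffle (Finsupp.single u c) (Finsupp.single v e) = (c * e) • shuffleWord u v := by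
  rw [shuffle, Finsupp.sum_single_index, Finsupp.sum_single_index] <;> simp


theorem shuffle_wordT (u v : Word d) : shuffle (wordT u) (wordT v) = shuffleWord u v := by
  rw [wordT, wordT, shuffle_single]; simp

/-- prepend a letter to every word -/
def pre (a : Fin d) (x : Tens d) : Tens d := Finsupp.mapDomain (fun w => a :: w) x

theorem pre_add (a : Fin d) (x y : Tens d) : pre a (x + y) = pre a x + pre a y :=
  Finsupp.mapDomain_add

theorem pre_smul (a : Fin d) (c : ℝ) (x : Tens d) : pre a (c • x) = c • pre a x :=
  Finsupp.mapDomain_smul _ _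

theorem pre_single (a : Fin d) (u : Word d) (c : ℝ) :
    pre a (Finsupp.single u c) = Finsupp.single (a :: u) c :=
  Finsupp.mapDomain_single

theorem appendLetter_add (a : Fin d) (x y : Tens d) :
    appendLetter a (x + y) = appendLetter a x + appendLetter a y :=
  Finsupp.mapDomain_add

theorem appendLetter_smul (a : Fin d) (c : ℝ) (x : Tens d) :
    appendLetter a (c • x) = c • appendLetter a x :=
  Finsupp.mapDomain_smul _ _

theorem appendLetter_single (a : Fin d) (u : Word d) (c : ℝ) :
    appendLetter a (Finsupp.single u c) = Finsupp.single (u ++ [a]) c :=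
  Finsupp.mapDomain_single

theorem shuffleWord_cons' (a b : Fin d) (u v : Word d) : shuffleWord (a::u) (b::v) =
    pre a (shuffleWord u (b :: v)) + pre b (shuffleWord (a :: u) v) :=
  shuffleWord_cons a b u v

theorem shuffle_one_left (x : Tens d) : shuffle (wordT ([]:Word d)) x = x := by
  induction x using Finsupp.induction_linear with
  | zero => exact shuffle_zero_right _
  | add x y hx hy => rw [shuffle_add_right, hx, hy]
  | single v c =>
      rw [wordT, shuffle_single, shuffleWord_nil_left, one_mul, Finsupp.smul_single, smul_eq_mul,
        mul_one]

theorem shuffle_one_right (x : Tens d) : shuffle x (wordT ([]:Word d)) = x := by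
  induction x using Finsupp.induction_linear with
  | zero => exact shuffle_zero_left _
  | add x y hx hy => rw [shuffle_add_left, hx, hy]
  | single v c =>
      rw [wordT, shuffle_single, shuffleWord_nil_right, mul_one, Finsupp.smul_single, smul_eq_mul,
        mul_one]

/-- Leibniz rule for shuffle with prepended letters, tensor level. -/
theorem shuffle_pre_pre (a b : Fin d) (x y : Tens d) :
    shuffle (pre a x) (pre b y) =
      pre a (shuffle x (pre b y)) + pre b (shuffle (pre a x) y) := by
  induction x using Finsupp.induction_linear with
  | zero => simp [pre, shuffle_zero_left, shuffle_zero_right]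
  | add x x' hx hx' =>
      simp only [pre_add, shuffle_add_left, shuffle_add_right, hx, hx']
      abel
  | single u c =>
      induction y using Finsupp.induction_linear with
      | zero => simp [pre, shuffle_zero_left, shuffle_zero_right]
      | add y y' hy hy' =>
          simp only [pre_add, shuffle_add_left, shuffle_add_right, hy, hy']
          abel
      | single v e =>
          rw [pre_single, pre_single, shuffle_single, shuffle_single, shuffle_single,
            shuffleWord_cons' a b u v, pre_smul, pre_smul, smul_add]

/-- Commutativity on words. -/
theorem shuffleWord_comm (u v : Word d) : shuffleWord u v = shuffleWord v u := by
  have key : ∀ n (u v : Word d), u.length + v.length = n → shuffleWord u v = shuffleWord v u := by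
    intro n
    induction n using Nat.strong_induction_on with
    | _ n ih =>
      intro u v hn
      match u, v with
      | [], v => rw [shuffleWord_nil_left, shuffleWord_nil_right]
      | u, [] => rw [shuffleWord_nil_left, shuffleWord_nil_right]
      | a :: u, b :: v =>
          rw [shuffleWord_cons' a b, shuffleWord_cons' b a,
            ih (u.length + (b::v).length) (by subst hn; simp) u (b::v) rfl,
            ih ((a::u).length + v.length) (by subst hn; simp) (a::u) v rfl, add_comm]
  exact key _ u v rfl

theorem shuffle_comm (x y : Tens d) : shuffle x y = shuffle y x := by
  induction x using Finsupp.induction_linear with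
  | zero => rw [shuffle_zero_left, shuffle_zero_right]
  | add x x' hx hx' => rw [shuffle_add_left, shuffle_add_right, hx, hx']
  | single u c =>
      induction y using Finsupp.induction_linear with
      | zero => rw [shuffle_zero_left, shuffle_zero_right]
      | add y y' hy hy' => rw [shuffle_add_left, shuffle_add_right, hy, hy']
      | single v e => rw [shuffle_single, shuffle_single, shuffleWord_comm, mul_comm]


theorem pre_appendLetter (c b : Fin d) (x : Tens d) :
    pre c (appendLetter b x) = appendLetter b (pre c x) := by
  rw [pre, appendLetter, pre, appendLetter, ← Finsupp.mapDomain_comp, ← Finsupp.mapDomain_comp]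
  rfl

/-- Right (concat) recursion for the shuffle of words. -/
theorem shuffleWord_concat (u v : Word d) (a b : Fin d) :
    shuffleWord (u ++ [a]) (v ++ [b]) =
      appendLetter a (shuffleWord u (v ++ [b])) + appendLetter b (shuffleWord (u ++ [a]) v) := by
  have key : ∀ n (u v : Word d) (a b : Fin d), u.length + v.length = n →
      shuffleWord (u ++ [a]) (v ++ [b]) =
      appendLetter a (shuffleWord u (v ++ [b])) + appendLetter b (shuffleWord (u ++ [a]) v) := by
    intro n
    induction n using Nat.strong_induction_on with
    | _ n ih =>
      intro u v a b hn
      match u, v with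
      | [], [] =>
          simp [shuffleWord_cons', shuffleWord_nil_left, shuffleWord_nil_right, pre_single,
            appendLetter_single, add_comm]
      | [], e :: v' =>
          have h1 := ih (0 + v'.length) (by subst hn; simp) [] v' a b rfl
          simp only [List.nil_append, List.cons_append] at h1 ⊢
          rw [shuffleWord_cons' a e, h1, shuffleWord_cons' a e]
          simp only [shuffleWord_nil_left, pre_single, appendLetter_single, pre_appendLetter,
            pre_add, appendLetter_add, List.cons_append, List.append_assoc,
            List.singleton_append, List.nil_append]
          abel
      | c :: u', [] =>
          have h1 := ih (u'.length + 0) (by subst hn; simp) u' [] a b rfl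
          simp only [List.nil_append, List.cons_append] at h1 ⊢
          rw [shuffleWord_cons' c b, h1, shuffleWord_cons' c b]
          simp only [shuffleWord_nil_right, pre_single, appendLetter_single, pre_appendLetter,
            pre_add, appendLetter_add, List.cons_append, List.append_assoc,
            List.singleton_append, List.nil_append]
          abel
      | c :: u', e :: v' =>
          have h1 := ih (u'.length + (e :: v').length) (by subst hn; simp) u' (e :: v') a b rfl
          have h2 := ih ((c :: u').length + v'.length) (by subst hn; simp) (c :: u') v' a b rfl
          simp only [List.cons_append] at h1 h2 ⊢
          rw [shuffleWord_cons' c e, h1, h2, shuffleWord_cons' c e, shuffleWord_cons' c e,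
            pre_add, pre_add, pre_appendLetter, pre_appendLetter, pre_appendLetter,
            pre_appendLetter, appendLetter_add, appendLetter_add]
          abel
  exact key _ u v a b rfl

/-- Leibniz rule for shuffle with appended letters, tensor level. -/
theorem shuffle_append_append (a b : Fin d) (x y : Tens d) :
    shuffle (appendLetter a x) (appendLetter b y) =
      appendLetter a (shuffle x (appendLetter b y)) +
        appendLetter b (shuffle (appendLetter a x) y) := by
  induction x using Finsupp.induction_linear with
  | zero => simp [appendLetter, shuffle_zero_left, shuffle_zero_right]
  | add x x' hx hx' =>
      simp only [appendLetter_add, shuffle_add_left, shuffle_add_right, hx, hx']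
      abel
  | single u c =>
      induction y using Finsupp.induction_linear with
      | zero => simp [appendLetter, shuffle_zero_left, shuffle_zero_right]
      | add y y' hy hy' =>
          simp only [appendLetter_add, shuffle_add_left, shuffle_add_right, hy, hy']
          abel
      | single v e =>
          rw [appendLetter_single, appendLetter_single, shuffle_single, shuffle_single,
            shuffle_single, shuffleWord_concat, appendLetter_smul, appendLetter_smul, smul_add]


theorem wordT_cons (c : Fin d) (w : Word d) : wordT (c :: w) = pre c (wordT w) := by
  rw [wordT, wordT, pre_single]

theorem shuffle_assoc_word (u v w : Word d) :
    shuffle (shuffleWord u v) (wordT w) = shuffle (wordT u) (shuffleWord v w) := by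
  have key : ∀ n (u v w : Word d), u.length + v.length + w.length = n →
      shuffle (shuffleWord u v) (wordT w) = shuffle (wordT u) (shuffleWord v w) := by
    intro n
    induction n using Nat.strong_induction_on with
    | _ n ih =>
      intro u v w hn
      match u, v, w with
      | [], v, w =>
          rw [shuffleWord_nil_left, show (Finsupp.single v 1 : Tens d) = wordT v from rfl,
            shuffle_wordT, shuffle_one_left]
      | u, [], w =>
          rw [shuffleWord_nil_right, shuffleWord_nil_left,
            show (Finsupp.single u 1 : Tens d) = wordT u from rfl,
            show (Finsupp.single w 1 : Tens d) = wordT w from rfl, shuffle_wordT]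
      | u, v, [] =>
          rw [shuffleWord_nil_right, shuffle_one_right,
            show (Finsupp.single v 1 : Tens d) = wordT v from rfl, shuffle_wordT]
      | a :: u, b :: v, c :: w =>
          have h1 := ih (u.length + (b::v).length + (c::w).length) (by subst hn; simp)
            u (b::v) (c::w) rfl
          have h2 := ih ((a::u).length + v.length + (c::w).length) (by subst hn; simp)
            (a::u) v (c::w) rfl
          have h3 := ih ((a::u).length + (b::v).length + w.length) (by subst hn; simp)
            (a::u) (b::v) w rfl
          rw [shuffleWord_cons' a b, shuffle_add_left, wordT_cons c w, shuffle_pre_pre,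
            shuffle_pre_pre, ← wordT_cons c w, h1, h2]
          have hc : pre c (shuffle (pre a (shuffleWord u (b::v))) (wordT w)) +
              pre c (shuffle (pre b (shuffleWord (a::u) v)) (wordT w)) =
              pre c (shuffle (wordT (a::u)) (shuffleWord (b::v) w)) := by
            rw [← pre_add, ← shuffle_add_left, ← shuffleWord_cons' a b, h3]
          rw [add_add_add_comm, hc, shuffleWord_cons' b c, shuffle_add_right, pre_add,
            shuffle_add_right, wordT_cons a u, shuffle_pre_pre, shuffle_pre_pre]
          abel
  exact key _ u v w rfl

theorem shuffle_assoc (x y z : Tens d) :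
    shuffle (shuffle x y) z = shuffle x (shuffle y z) := by
  induction x using Finsupp.induction_linear with
  | zero => rw [shuffle_zero_left, shuffle_zero_left, shuffle_zero_left]
  | add x x' hx hx' => rw [shuffle_add_left, shuffle_add_left, shuffle_add_left, hx, hx']
  | single u c =>
    induction y using Finsupp.induction_linear with
    | zero => simp only [shuffle_zero_left, shuffle_zero_right]
    | add y y' hy hy' =>
        rw [shuffle_add_right, shuffle_add_left, shuffle_add_left, shuffle_add_right, hy, hy']
    | single v e =>
      induction z using Finsupp.induction_linear with
      | zero => simp only [shuffle_zero_left, shuffle_zero_right]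
      | add z z' hz hz' => rw [shuffle_add_right, shuffle_add_right, shuffle_add_right, hz, hz']
      | single w f =>
          have hw : (Finsupp.single w f : Tens d) = f • wordT w := by
            rw [wordT, Finsupp.smul_single, smul_eq_mul, mul_one]
          have hu : (Finsupp.single u c : Tens d) = c • wordT u := by
            rw [wordT, Finsupp.smul_single, smul_eq_mul, mul_one]
          have L : shuffle (shuffle (Finsupp.single u c) (Finsupp.single v e))
              (Finsupp.single w f) = (c*e*f) • shuffle (shuffleWord u v) (wordT w) := by
            rw [shuffle_single, shuffle_smul_left, hw, shuffle_smul_right, smul_smul]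
          have R : shuffle (Finsupp.single u c) (shuffle (Finsupp.single v e)
              (Finsupp.single w f)) = (e*f*c) • shuffle (wordT u) (shuffleWord v w) := by
            rw [shuffle_single, shuffle_smul_right, hu, shuffle_smul_left, smul_smul]
          rw [L, R, shuffle_assoc_word]
          congr 1
          ring

theorem shuffle_sum_left {ι : Type*} (s : Finset ι) (f : ι → Tens d) (y : Tens d) :
    shuffle (∑ i ∈ s, f i) y = ∑ i ∈ s, shuffle (f i) y :=
  map_sum (shuffleLM.flip y) f s

theorem shuffle_sum_right {ι : Type*} (s : Finset ι) (x : Tens d) (f : ι → Tens d) :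
    shuffle x (∑ i ∈ s, f i) = ∑ i ∈ s, shuffle x (f i) :=
  map_sum (shuffleLM x) f s

theorem appendLetter_sum {ι : Type*} (a : Fin d) (s : Finset ι) (f : ι → Tens d) :
    appendLetter a (∑ i ∈ s, f i) = ∑ i ∈ s, appendLetter a (f i) :=
  Finsupp.mapDomain_finset_sum

theorem Mp_single (p : PolyMap d m) (w : Word m) (c : ℝ) :
    Mp p (Finsupp.single w c) = c • MpWord p w := by
  rw [Mp, Finsupp.sum_single_index]; simp

theorem Mp_zero (p : PolyMap d m) : Mp p 0 = 0 := by simp [Mp]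

theorem Mp_add (p : PolyMap d m) (x y : Tens m) : Mp p (x + y) = Mp p x + Mp p y := by
  rw [Mp, Finsupp.sum_add_index] <;> simp [add_smul, Mp]

theorem Mp_smul (p : PolyMap d m) (c : ℝ) (x : Tens m) : Mp p (c • x) = c • Mp p x := by
  rw [Mp, Finsupp.sum_smul_index]
  · rw [Mp, Finsupp.smul_sum]
    exact Finsupp.sum_congr fun w _ => by rw [mul_smul]
  · intro; simp

theorem MpWord_nil (p : PolyMap d m) : MpWord p [] = Finsupp.single [] 1 := rfl

/-- The operator `x ↦ Σ_j (x ⧢ k_p^{aj})∘j`. -/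
def La (p : PolyMap d m) (a : Fin m) (x : Tens d) : Tens d :=
  ∑ j : Fin d, appendLetter j (shuffle x (kP p a j))

theorem MpWord_concat (p : PolyMap d m) (u : Word m) (a : Fin m) :
    MpWord p (u ++ [a]) = La p a (MpWord p u) := by
  rw [MpWord, MpWord, List.reverse_append, La]
  simp [MpRev]

theorem La_add (p : PolyMap d m) (a : Fin m) (x y : Tens d) :
    La p a (x + y) = La p a x + La p a y := by
  rw [La, La, La, ← Finset.sum_add_distrib]
  exact Finset.sum_congr rfl fun j _ => by rw [shuffle_add_left, appendLetter_add]

theorem La_smul (p : PolyMap d m) (a : Fin m) (c : ℝ) (x : Tens d) :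
    La p a (c • x) = c • La p a x := by
  rw [La, La, Finset.smul_sum]
  exact Finset.sum_congr rfl fun j _ => by rw [shuffle_smul_left, appendLetter_smul]

theorem Mp_appendLetter (p : PolyMap d m) (a : Fin m) (x : Tens m) :
    Mp p (appendLetter a x) = La p a (Mp p x) := by
  induction x using Finsupp.induction_linear with
  | zero => simp [appendLetter, Mp_zero, La, shuffle_zero_left]
  | add x y hx hy => rw [appendLetter_add, Mp_add, hx, hy, Mp_add, La_add]
  | single u c =>
      rw [appendLetter_single, Mp_single, Mp_single, MpWord_concat, La_smul]

theorem shuffle_La_La (p : PolyMap d m) (a b : Fin m) (x y : Tens d) :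
    shuffle (La p a x) (La p b y) =
      La p a (shuffle x (La p b y)) + La p b (shuffle (La p a x) y) := by
  have hswap : ∀ z w k : Tens d, shuffle (shuffle z k) w = shuffle (shuffle z w) k := by
    intro z w k
    rw [shuffle_assoc, shuffle_assoc, shuffle_comm k w]
  calc shuffle (La p a x) (La p b y)
      = ∑ j : Fin d, ∑ k : Fin d,
          (appendLetter j (shuffle (shuffle x (kP p a j))
              (appendLetter k (shuffle y (kP p b k)))) +
           appendLetter k (shuffle (shuffle (appendLetter j (shuffle x (kP p a j))) y)
              (kP p b k))) := by
        rw [La, La, shuffle_sum_left]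
        refine Finset.sum_congr rfl fun j _ => ?_
        rw [shuffle_sum_right]
        refine Finset.sum_congr rfl fun k _ => ?_
        rw [shuffle_append_append]
        exact congrArg₂ (· + ·) rfl (congrArg _ (shuffle_assoc _ _ _).symm)
    _ = (∑ j : Fin d, ∑ k : Fin d, appendLetter j (shuffle (shuffle x (kP p a j))
            (appendLetter k (shuffle y (kP p b k))))) +
        (∑ j : Fin d, ∑ k : Fin d, appendLetter k
            (shuffle (shuffle (appendLetter j (shuffle x (kP p a j))) y) (kP p b k))) := by
        rw [← Finset.sum_add_distrib]
        exact Finset.sum_congr rfl fun j _ => Finset.sum_add_distrib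
    _ = La p a (shuffle x (La p b y)) + La p b (shuffle (La p a x) y) := by
        congr 1
        · rw [La]
          refine Finset.sum_congr rfl fun j _ => ?_
          rw [← appendLetter_sum, ← shuffle_sum_right]
          rw [show (∑ k : Fin d, appendLetter k (shuffle y (kP p b k))) = La p b y from rfl]
          rw [hswap]
        · rw [La, Finset.sum_comm]
          refine Finset.sum_congr rfl fun k _ => ?_
          rw [← appendLetter_sum, ← shuffle_sum_left, ← shuffle_sum_left,
            show (∑ j : Fin d, appendLetter j (shuffle x (kP p a j))) = La p a x from rfl]


theorem Mp_shuffleWord (p : PolyMap d m) (u v : Word m) :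
    Mp p (shuffleWord u v) = shuffle (MpWord p u) (MpWord p v) := by
  have key : ∀ n (u v : Word m), u.length + v.length = n →
      Mp p (shuffleWord u v) = shuffle (MpWord p u) (MpWord p v) := by
    intro n
    induction n using Nat.strong_induction_on with
    | _ n ih =>
      intro u v hn
      rcases u.eq_nil_or_concat' with rfl | ⟨u', a, rfl⟩
      · rw [shuffleWord_nil_left, Mp_single, one_smul, MpWord_nil,
          show (Finsupp.single [] 1 : Tens d) = wordT [] from rfl, shuffle_one_left]
      rcases v.eq_nil_or_concat' with rfl | ⟨v', b, rfl⟩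
      · rw [shuffleWord_nil_right, Mp_single, one_smul, MpWord_nil,
          show (Finsupp.single [] 1 : Tens d) = wordT [] from rfl, shuffle_one_right]
      have h1 := ih (u'.length + (v' ++ [b]).length) (by subst hn; simp) u' (v' ++ [b]) rfl
      have h2 := ih ((u' ++ [a]).length + v'.length) (by subst hn; simp) (u' ++ [a]) v' rfl
      rw [shuffleWord_concat, Mp_add, Mp_appendLetter, Mp_appendLetter, h1, h2,
        MpWord_concat, MpWord_concat]
      exact (shuffle_La_La p a b _ _).symm
  exact key _ u v rfl

theorem Mp_shuffle_hom_aux (p : PolyMap d m) (x y : Tens m) :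
    Mp p (shuffle x y) = shuffle (Mp p x) (Mp p y) := by
  induction x using Finsupp.induction_linear with
  | zero => simp only [Mp_zero, shuffle_zero_left]
  | add x x' hx hx' => rw [shuffle_add_left, Mp_add, hx, hx', Mp_add, shuffle_add_left]
  | single u c =>
    induction y using Finsupp.induction_linear with
    | zero => simp only [Mp_zero, shuffle_zero_right]
    | add y y' hy hy' => rw [shuffle_add_right, Mp_add, hy, hy', Mp_add, shuffle_add_right]
    | single v e =>
        rw [shuffle_single, Mp_smul, Mp_shuffleWord, Mp_single, Mp_single,
          shuffle_smul_left, shuffle_smul_right, smul_smul]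

/-- For any polynomial map `p : ℝ^d → ℝ^m` with `p(0) = 0`, the map
`M_p : T(ℝ^m) → T(ℝ^d)` is an algebra homomorphism for the shuffle products. -/
theorem Mp_shuffle_hom (d m : ℕ) (p : PolyMap d m)
    (hp : ∀ i, MvPolynomial.eval (0 : Fin d → ℝ) (p i) = 0) :
    Mp p (wordT ([] : Word m)) = wordT ([] : Word d) ∧
    ∀ x y : Tens m, Mp p (shuffle x y) = shuffle (Mp p x) (Mp p y) := by
  refine ⟨?_, Mp_shuffle_hom_aux p⟩
  rw [wordT, Mp_single, one_smul, MpWord_nil, wordT]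

end SigPaper
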